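/- The polynomial X^4 - 3X^3 - X^2 + 3X + 1 (the characteristic polynomial of the matrix A3) has four pairwise distinct real roots, and none of these roots equals 1 or -1; hence A3 is a hyperbolic operator (it has four distinct real eigenvalues, none of absolute value 1). -/
import Mathlib

open Matrix Polynomial

def A3R : Matrix (Fin 4) (Fin 4) ℝ :=
  !![0, 1, 0, 0; 0, 0, 1, 0; 0, 0, 0, 1; -1, -3, 1, 3]

/-- The characteristic polynomial of `A3`, as a real polynomial. -/
noncomputable def p3 : Polynomial ℝ := X ^ 4 - 3 * X ^ 3 - X ^ 2 + 3 * X + 1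

set_option maxHeartbeats 1600000 in
theorem statement16 :
    ∃ r : Fin 4 → ℝ,
      Function.Injective r ∧
      (∀ i, p3.eval (r i) = 0) ∧
      (∀ x : ℝ, p3.eval x = 0 → ∃ i, x = r i) ∧
      (∀ i, r i ≠ 1 ∧ r i ≠ -1) ∧
      (∀ i, r i ∈ spectrum ℝ A3R) ∧
      (∀ i, |r i| ≠ 1) := by
  obtain ⟨q, hq, hq0⟩ : ∃ q : ℝ, q ^ 2 = 5 ∧ 0 ≤ q :=
    ⟨Real.sqrt 5, Real.sq_sqrt (by norm_num), Real.sqrt_nonneg 5⟩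
  have hq1 : 2.2 < q := by nlinarith
  have hq2 : q < 2.24 := by nlinarith
  obtain ⟨u, hu, hu0⟩ : ∃ u : ℝ, u ^ 2 = ((3 + q) / 2) ^ 2 + 4 ∧ 0 ≤ u :=
    ⟨Real.sqrt (((3 + q) / 2) ^ 2 + 4), Real.sq_sqrt (by positivity), Real.sqrt_nonneg _⟩
  obtain ⟨v, hv, hv0⟩ : ∃ v : ℝ, v ^ 2 = ((3 - q) / 2) ^ 2 + 4 ∧ 0 ≤ v :=
    ⟨Real.sqrt (((3 - q) / 2) ^ 2 + 4), Real.sq_sqrt (by positivity), Real.sqrt_nonneg _⟩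
  have hu1 : 3.28 < u := by nlinarith
  have hu2 : u < 3.30 := by nlinarith
  have hv1 : 2.03 < v := by nlinarith
  have hv2 : v < 2.04 := by nlinarith
  obtain ⟨r0, hr0def⟩ : ∃ y : ℝ, y = ((3 + q) / 2 + u) / 2 := ⟨_, rfl⟩
  obtain ⟨r1, hr1def⟩ : ∃ y : ℝ, y = ((3 + q) / 2 - u) / 2 := ⟨_, rfl⟩
  obtain ⟨r2, hr2def⟩ : ∃ y : ℝ, y = ((3 - q) / 2 + v) / 2 := ⟨_, rfl⟩
  obtain ⟨r3, hr3def⟩ : ∃ y : ℝ, y = ((3 - q) / 2 - v) / 2 := ⟨_, rfl⟩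
  -- numeric bounds
  have b0l : 2.94 < r0 := by rw [hr0def]; linarith
  have b0u : r0 < 2.96 := by rw [hr0def]; linarith
  have b1l : -0.35 < r1 := by rw [hr1def]; linarith
  have b1u : r1 < -0.33 := by rw [hr1def]; linarith
  have b2l : 1.2 < r2 := by rw [hr2def]; linarith
  have b2u : r2 < 1.22 := by rw [hr2def]; linarith
  have b3l : -0.83 < r3 := by rw [hr3def]; linarith
  have b3u : r3 < -0.81 := by rw [hr3def]; linarith
  -- evaluation of p3
  have hev : ∀ x : ℝ, p3.eval x = x ^ 4 - 3 * x ^ 3 - x ^ 2 + 3 * x + 1 := by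
    intro x; simp [p3]
  -- factorization
  have hfact : ∀ x : ℝ, x ^ 4 - 3 * x ^ 3 - x ^ 2 + 3 * x + 1 =
      ((x - r0) * (x - r1)) * ((x - r2) * (x - r3)) := by
    intro x
    have h1 : (x - r0) * (x - r1) = x ^ 2 - (3 + q) / 2 * x - 1 := by
      rw [hr0def, hr1def]; linear_combination (-(1 : ℝ) / 4) * hu
    have h2 : (x - r2) * (x - r3) = x ^ 2 - (3 - q) / 2 * x - 1 := by
      rw [hr2def, hr3def]; linear_combination (-(1 : ℝ) / 4) * hv
    have h3 : (x ^ 2 - (3 + q) / 2 * x - 1) * (x ^ 2 - (3 - q) / 2 * x - 1) =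
        x ^ 4 - 3 * x ^ 3 - x ^ 2 + 3 * x + 1 := by
      linear_combination (-(x ^ 2) / 4) * hq
    rw [h1, h2, h3]
  have hroot : ∀ i : Fin 4, p3.eval (![r0, r1, r2, r3] i) = 0 := by
    have h0 : p3.eval r0 = 0 := by rw [hev, hfact]; ring
    have h1 : p3.eval r1 = 0 := by rw [hev, hfact]; ring
    have h2 : p3.eval r2 = 0 := by rw [hev, hfact]; ring
    have h3 : p3.eval r3 = 0 := by rw [hev, hfact]; ring
    intro i; fin_cases i <;> simpa using ‹_›
  have hvec : ∀ x : ℝ, ∀ i : Fin 4, ![r0, r1, r2, r3] i = x →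
      x = r0 ∨ x = r1 ∨ x = r2 ∨ x = r3 := by
    intro x i h
    fin_cases i <;> simp at h <;> tauto
  refine ⟨![r0, r1, r2, r3], ?_, ?_, ?_, ?_, ?_, ?_⟩
  · -- injective
    intro i j hij
    fin_cases i <;> fin_cases j <;> [skip; exfalso; exfalso; exfalso;
      exfalso; skip; exfalso; exfalso; exfalso; exfalso; skip; exfalso;
      exfalso; exfalso; exfalso; skip] <;> first | rfl | (simp at hij; linarith)
  · -- roots
    exact hroot
  · -- completeness
    intro x hx
    rw [hev, hfact] at hx
    rcases mul_eq_zero.1 hx with h | h <;> rcases mul_eq_zero.1 h with h' | h' <;>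
      rw [sub_eq_zero] at h'
    · exact ⟨0, by simpa using h'⟩
    · exact ⟨1, by simpa using h'⟩
    · exact ⟨2, by simpa using h'⟩
    · exact ⟨3, by simpa using h'⟩
  · -- not ±1
    intro i
    constructor <;> intro h <;> rcases hvec _ i h with h' | h' | h' | h' <;> linarith
  · -- spectrum
    have hdet : ∀ x : ℝ, (algebraMap ℝ (Matrix (Fin 4) (Fin 4) ℝ) x - A3R).det = p3.eval x := by
      intro x
      have h : algebraMap ℝ (Matrix (Fin 4) (Fin 4) ℝ) x - A3R =
          !![x, -1, 0, 0; 0, x, -1, 0; 0, 0, x, -1; 1, 3, -1, x - 3] := by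
        ext i j
        fin_cases i <;> fin_cases j <;>
          simp [A3R, Matrix.algebraMap_eq_diagonal, Matrix.diagonal]
      rw [h]
      simp [Matrix.det_succ_row_zero, Fin.sum_univ_succ, p3, Fin.succAbove] <;> ring
    have key : ∀ x : ℝ, p3.eval x = 0 → x ∈ spectrum ℝ A3R := by
      intro x hx
      rw [spectrum.mem_iff]
      intro hunit
      rw [Matrix.isUnit_iff_isUnit_det, isUnit_iff_ne_zero] at hunit
      exact hunit (by rw [hdet x, hx])
    intro i
    exact key _ (hroot i)
  · -- |r i| ≠ 1
    intro i h
    rw [abs_eq (by norm_num : (0:ℝ) ≤ 1)] at h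
    rcases h with h | h <;> rcases hvec _ i h with h' | h' | h' | h' <;> linarith
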